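/- Let A = ℤ[1/m] with m a square-free odd natural number divisible by 3. Then the additive subgroup M of A generated by {x(a²-1) : x ∈ A, a ∈ Aˣ} ∪ {3(b+1)(c+1) : b,c ∈ Aˣ} equals 4A, and A/M ≅ ℤ/4. -/

import Mathlib

/-- The additive subgroup M of A generated by x(a²-1) (x ∈ A, a ∈ Aˣ)
and 3(b+1)(c+1) (b, c ∈ Aˣ). -/
def Msub (A : Type*) [CommRing A] : AddSubgroup A :=
  AddSubgroup.closure
    ({y | ∃ (x : A) (a : Aˣ), y = x * ((a : A) ^ 2 - 1)} ∪
     {y | ∃ b c : Aˣ, y = 3 * ((b : A) + 1) * ((c : A) + 1)})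

lemma away_lift_exists (m n : ℕ) [NeZero n] (h : Nat.Coprime m n) :
    ∃ φ : Localization.Away (m : ℤ) →+* ZMod n,
      Function.Surjective φ ∧
      ∀ y, (φ y = 0 ↔ ∃ x, y = (n : Localization.Away (m : ℤ)) * x) := by
  set A := Localization.Away (m : ℤ)
  have hu : IsUnit ((Int.castRingHom (ZMod n)) (m : ℤ)) := by
    simpa using (ZMod.isUnit_iff_coprime m n).2 h
  refine ⟨IsLocalization.Away.lift (S := A) (m : ℤ) hu, ?_, ?_⟩
  · intro z
    obtain ⟨w, rfl⟩ := ZMod.intCast_surjective z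
    exact ⟨algebraMap ℤ A w, by simp⟩
  · intro y
    constructor
    · intro hy
      obtain ⟨⟨z, s⟩, hzs⟩ := IsLocalization.mk'_surjective (Submonoid.powers (m : ℤ)) y
      have key : y * algebraMap ℤ A (s : ℤ) = algebraMap ℤ A z := by
        rw [← hzs]; exact IsLocalization.mk'_spec A z s
      have hz0 : ((z : ℤ) : ZMod n) = 0 := by
        have := congrArg (IsLocalization.Away.lift (S := A) (m : ℤ) hu) key
        simp only [map_mul, IsLocalization.Away.lift_eq, hy, zero_mul] at this
        simpa using this.symm
      obtain ⟨w, hw⟩ := (ZMod.intCast_zmod_eq_zero_iff_dvd z n).1 hz0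
      have hs : IsUnit (algebraMap ℤ A (s : ℤ)) := IsLocalization.map_units A s
      refine ⟨algebraMap ℤ A w * ↑hs.unit⁻¹, ?_⟩
      have h1 : algebraMap ℤ A (s : ℤ) * (↑hs.unit⁻¹ : A) = 1 := by
        exact hs.mul_val_inv
      calc y = y * (algebraMap ℤ A (s : ℤ) * (↑hs.unit⁻¹ : A)) := by rw [h1, mul_one]
        _ = (y * algebraMap ℤ A (s : ℤ)) * (↑hs.unit⁻¹ : A) := by ring
        _ = algebraMap ℤ A z * (↑hs.unit⁻¹ : A) := by rw [key]
        _ = (n : A) * (algebraMap ℤ A w * ↑hs.unit⁻¹) := by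
              rw [hw]; push_cast; ring
    · rintro ⟨x, rfl⟩
      simp

/-- A = ℤ[1/m], realized as the localization of ℤ away from m. -/
theorem stmt_14 (m : ℕ) (hsf : Squarefree m) (h2 : ¬ 2 ∣ m) (h3 : 3 ∣ m) :
    (∀ y : Localization.Away (m : ℤ),
        y ∈ Msub (Localization.Away (m : ℤ)) ↔
          ∃ x : Localization.Away (m : ℤ), y = 4 * x) ∧
      Nonempty ((Localization.Away (m : ℤ) ⧸ Msub (Localization.Away (m : ℤ)))
        ≃+ ZMod 4) := by
  set A := Localization.Away (m : ℤ) with hA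
  have hodd : Odd m := Nat.odd_iff.2 (Nat.not_even_iff.1 (fun he => h2 he.two_dvd))
  have hc2 : Nat.Coprime m 2 := ((Nat.prime_two.coprime_iff_not_dvd).2 h2).symm
  have hc4 : Nat.Coprime m 4 := by
    have : (4 : ℕ) = 2 ^ 2 := by norm_num
    rw [this]; exact hc2.pow_right 2
  have hc8 : Nat.Coprime m 8 := by
    have : (8 : ℕ) = 2 ^ 3 := by norm_num
    rw [this]; exact hc2.pow_right 3
  obtain ⟨φ2, hs2, hk2⟩ := away_lift_exists m 2 hc2
  obtain ⟨φ4, hs4, hk4⟩ := away_lift_exists m 4 hc4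
  obtain ⟨φ8, hs8, hk8⟩ := away_lift_exists m 8 hc8
  -- 3 is a unit in A
  have h3u : IsUnit ((3 : A)) := by
    have : IsUnit (algebraMap ℤ A (3 : ℤ)) :=
      IsLocalization.Away.isUnit_of_dvd (x := (m : ℤ)) (by exact_mod_cast Int.natCast_dvd_natCast.2 h3)
    simpa using this
  set u3 : Aˣ := h3u.unit with hu3
  have hu3v : (u3 : A) = 3 := h3u.unit_spec
  -- units square to 1 mod 8
  have h8sq : ∀ a : Aˣ, ∃ x : A, (a : A) ^ 2 - 1 = 8 * x := by
    intro a
    have hun : IsUnit (φ8 (a : A)) := (a.isUnit).map φ8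
    have hval : ∀ u : (ZMod 8)ˣ, (u : ZMod 8) ^ 2 = 1 := by decide
    have : φ8 ((a : A) ^ 2 - 1) = 0 := by
      rw [map_sub, map_pow, map_one, ← hun.unit_spec, hval hun.unit, sub_self]
    obtain ⟨x, hx⟩ := (hk8 _).1 this
    exact ⟨x, by rw [hx]; norm_num⟩
  -- b + 1 is even for units b
  have h2ev : ∀ a : Aˣ, ∃ x : A, (a : A) + 1 = 2 * x := by
    intro a
    have hun : IsUnit (φ2 (a : A)) := (a.isUnit).map φ2
    have hval : ∀ u : (ZMod 2)ˣ, (u : ZMod 2) = 1 := by decide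
    have : φ2 ((a : A) + 1) = 0 := by
      rw [map_add, map_one, ← hun.unit_spec, hval hun.unit]; decide
    obtain ⟨x, hx⟩ := (hk2 _).1 this
    exact ⟨x, by rw [hx]; norm_num⟩
  -- multiples of 8 are in M
  have mem8 : ∀ u : A, 8 * u ∈ Msub A := by
    intro u
    exact AddSubgroup.subset_closure (Or.inl ⟨u, u3, by rw [hu3v]; ring⟩)
  have mem12 : (12 : A) ∈ Msub A := by
    refine AddSubgroup.subset_closure (Or.inr ⟨1, 1, ?_⟩)
    rw [Units.val_one]; norm_num
  have hmain : ∀ y : A, y ∈ Msub A ↔ ∃ x : A, y = 4 * x := by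
    intro y
    constructor
    · intro hy
      have hle : Msub A ≤ (Ideal.span {(4 : A)}).toAddSubgroup := by
        rw [Msub, AddSubgroup.closure_le]
        rintro z (⟨x, a, rfl⟩ | ⟨b, c, rfl⟩)
        · obtain ⟨w, hw⟩ := h8sq a
          rw [SetLike.mem_coe, Submodule.mem_toAddSubgroup, Ideal.mem_span_singleton]
          exact ⟨2 * (x * w), by rw [hw]; ring⟩
        · obtain ⟨wb, hwb⟩ := h2ev b
          obtain ⟨wc, hwc⟩ := h2ev c
          rw [SetLike.mem_coe, Submodule.mem_toAddSubgroup, Ideal.mem_span_singleton]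
          exact ⟨3 * (wb * wc), by rw [hwb, hwc]; ring⟩
      have := hle hy
      rw [Submodule.mem_toAddSubgroup, Ideal.mem_span_singleton] at this
      obtain ⟨c, hc⟩ := this
      exact ⟨c, hc⟩
    · rintro ⟨x, rfl⟩
      have hcase : φ2 x = 0 ∨ φ2 x = 1 := by
        generalize φ2 x = t; revert t; decide
      rcases hcase with hx0 | hx1
      · obtain ⟨u, hu⟩ := (hk2 _).1 hx0
        have : (4 : A) * x = 8 * u := by rw [hu]; push_cast; ring
        rw [this]; exact mem8 u
      · have : φ2 (x - 1) = 0 := by rw [map_sub, map_one, hx1, sub_self]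
        obtain ⟨u, hu⟩ := (hk2 _).1 this
        have hx : x = 2 * u + 1 := by
          have h' := eq_add_of_sub_eq hu; push_cast at h'; linear_combination h'
        have : (4 : A) * x = 12 + 8 * (u - 1) := by rw [hx]; ring
        rw [this]
        exact AddSubgroup.add_mem _ mem12 (mem8 (u - 1))
  refine ⟨hmain, ?_⟩
  have hker : φ4.toAddMonoidHom.ker = Msub A := by
    ext y
    rw [AddMonoidHom.mem_ker]
    simp only [RingHom.toAddMonoidHom_eq_coe, AddMonoidHom.coe_coe]
    rw [hmain y, hk4 y]
    constructor
    · rintro ⟨x, hx⟩; exact ⟨x, by rw [hx]; norm_num⟩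
    · rintro ⟨x, hx⟩; exact ⟨x, by rw [hx]; norm_num⟩
  have hsurj : Function.Surjective φ4.toAddMonoidHom := hs4
  exact ⟨(hker ▸ QuotientAddGroup.quotientKerEquivOfSurjective φ4.toAddMonoidHom hsurj)⟩
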